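/- Let f, f_N: [a, b] → ℝ be continuous functions with f_N → f uniformly (in probability), let α ∈ ℝ, and define β := inf{ x ∈ [a,b] : f(x) ≤ α } and β_N := inf{ x ∈ [a,b] : f_N(x) ≤ α } (with the convention inf ∅ = b). If f is strictly decreasing and f(a) > α > f(b), then β_N → β in probability. -/

import Mathlib

open MeasureTheory

lemma hitting_time_det {a b : ℝ} (hab : a ≤ b) {α : ℝ} {f : ℝ → ℝ}
    (hfanti : StrictAntiOn f (Set.Icc a b)) (hfa : α < f a) (hfb : f b < α)
    {c : ℝ} (hca : a < c) (hcb : c < b) (hfc : f c = α)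
    {ε : ℝ} (hε : 0 < ε) :
    ∃ δ > 0, ∀ g : ℝ → ℝ, (∀ x ∈ Set.Icc a b, |g x - f x| < δ) →
      dist (sInf (insert b {x ∈ Set.Icc a b | g x ≤ α})) c < ε := by
  set ε' : ℝ := min (ε/2) (min ((c-a)/2) ((b-c)/2)) with hε'def
  have hε'pos : 0 < ε' := by
    refine lt_min (by linarith) (lt_min (by linarith) (by linarith))
  have hε'1 : ε' ≤ ε/2 := min_le_left _ _
  have hε'2 : ε' ≤ (c-a)/2 := (min_le_right _ _).trans (min_le_left _ _)
  have hε'3 : ε' ≤ (b-c)/2 := (min_le_right _ _).trans (min_le_right _ _)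
  have hmem1 : c - ε' ∈ Set.Icc a b := ⟨by linarith, by linarith⟩
  have hmem2 : c + ε' ∈ Set.Icc a b := ⟨by linarith, by linarith⟩
  have hcmem : c ∈ Set.Icc a b := ⟨hca.le, hcb.le⟩
  have h1 : α < f (c - ε') := by
    have := hfanti hmem1 hcmem (by linarith)
    linarith [hfc]
  have h2 : f (c + ε') < α := by
    have := hfanti hcmem hmem2 (by linarith)
    linarith [hfc]
  refine ⟨min (f (c - ε') - α) (α - f (c + ε')), lt_min (by linarith) (by linarith), ?_⟩
  intro g hg
  set δ := min (f (c - ε') - α) (α - f (c + ε')) with hδdef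
  set S := insert b {x ∈ Set.Icc a b | g x ≤ α} with hSdef
  have hbddS : BddBelow S := by
    refine ⟨a, ?_⟩
    rintro y (rfl | ⟨hy, _⟩)
    · exact hab
    · exact hy.1
  -- upper bound on sInf S
  have hub : sInf S ≤ c + ε' := by
    apply csInf_le hbddS
    refine Set.mem_insert_of_mem _ ⟨hmem2, ?_⟩
    have := hg _ hmem2
    have h3 : g (c + ε') - f (c + ε') < δ := (le_abs_self _).trans_lt this
    have h4 : δ ≤ α - f (c + ε') := min_le_right _ _
    linarith
  -- lower bound on sInf S
  have hlb : c - ε' ≤ sInf S := by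
    apply le_csInf ⟨b, Set.mem_insert _ _⟩
    rintro y (rfl | ⟨hy, hgy⟩)
    · linarith
    · by_contra hlt
      push_neg at hlt
      have hyc : f (c - ε') < f y := hfanti hy hmem1 hlt
      have habs := hg _ hy
      have h3 : f y - g y < δ := by
        have h5 := neg_abs_le (g y - f y)
        linarith
      have h4 : δ ≤ f (c - ε') - α := min_le_left _ _
      linarith
  rw [Real.dist_eq, abs_lt]
  constructor <;> linarith

/-- If continuous random functions `F_N(ω,·)` converge uniformly in probability to a
continuous strictly decreasing `f` with `f(a) > α > f(b)`, then the hitting points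
`β_N := inf{x ∈ [a,b] : F_N(ω,x) ≤ α}` (with `inf ∅ = b`) converge in probability to
`β := inf{x ∈ [a,b] : f(x) ≤ α}`. -/
theorem hitting_time_tendstoInMeasure {Ω : Type*} [MeasurableSpace Ω]
    (P : Measure Ω) [IsProbabilityMeasure P]
    (a b : ℝ) (hab : a ≤ b) (α : ℝ)
    (F : ℕ → Ω → ℝ → ℝ) (hFcont : ∀ N ω, ContinuousOn (F N ω) (Set.Icc a b))
    (f : ℝ → ℝ) (hfcont : ContinuousOn f (Set.Icc a b))
    (hfanti : StrictAntiOn f (Set.Icc a b))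
    (hfa : α < f a) (hfb : f b < α)
    (hmeas : ∀ N, Measurable fun ω => sInf (insert b {x ∈ Set.Icc a b | F N ω x ≤ α}))
    (hunif : TendstoInMeasure P
      (fun N ω => ⨆ x : Set.Icc a b, |F N ω ↑x - f ↑x|)
      Filter.atTop (fun _ => (0 : ℝ))) :
    TendstoInMeasure P
      (fun N ω => sInf (insert b {x ∈ Set.Icc a b | F N ω x ≤ α}))
      Filter.atTop (fun _ => sInf {x ∈ Set.Icc a b | f x ≤ α}) := by
  -- find the crossing point c
  obtain ⟨c, hcmem, hfc⟩ : ∃ c ∈ Set.Icc a b, f c = α := by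
    have h := intermediate_value_Icc' hab hfcont
    have : α ∈ Set.Icc (f b) (f a) := ⟨hfb.le, hfa.le⟩
    obtain ⟨c, hc1, hc2⟩ := h this
    exact ⟨c, hc1, hc2⟩
  have hca : a < c := by
    rcases eq_or_lt_of_le hcmem.1 with h | h
    · exfalso; rw [← h] at hfc; linarith
    · exact h
  have hcb : c < b := by
    rcases eq_or_lt_of_le hcmem.2 with h | h
    · exfalso; rw [h] at hfc; linarith
    · exact h
  -- the limiting hitting point is c
  have hsinf : sInf {x ∈ Set.Icc a b | f x ≤ α} = c := by
    apply le_antisymm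
    · exact csInf_le ⟨a, fun y hy => hy.1.1⟩ ⟨hcmem, hfc.le⟩
    · refine le_csInf ⟨c, ⟨hcmem, hfc.le⟩⟩ ?_
      rintro y ⟨hy, hfy⟩
      by_contra hlt
      push_neg at hlt
      have := hfanti hy hcmem hlt
      linarith
  rw [tendstoInMeasure_iff_dist] at hunif ⊢
  intro ε hε
  obtain ⟨δ, hδpos, hδ⟩ := hitting_time_det hab hfanti hfa hfb hca hcb hfc hε
  refine tendsto_of_tendsto_of_tendsto_of_le_of_le tendsto_const_nhds (hunif δ hδpos)
    (fun N => zero_le) (fun N => measure_mono ?_)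
  intro ω hω
  simp only [Set.mem_setOf_eq] at hω ⊢
  by_contra hcon
  push_neg at hcon
  -- sup is small, so all pointwise differences are < δ
  have hbdd : BddAbove (Set.range fun x : Set.Icc a b => |F N ω ↑x - f ↑x|) := by
    have hcont : Continuous fun x : Set.Icc a b => |F N ω ↑x - f ↑x| :=
      ((hFcont N ω).restrict.sub hfcont.restrict).abs
    exact (isCompact_range hcont).bddAbove
  have hptw : ∀ x ∈ Set.Icc a b, |F N ω x - f x| < δ := by
    intro x hx
    have h1 : |F N ω x - f x| ≤ ⨆ x : Set.Icc a b, |F N ω ↑x - f ↑x| :=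
      le_ciSup hbdd ⟨x, hx⟩
    have h2 : (⨆ x : Set.Icc a b, |F N ω ↑x - f ↑x|) < δ := by
      have := hcon
      rw [Real.dist_0_eq_abs] at this
      exact (le_abs_self _).trans_lt this
    linarith
  have := hδ (F N ω) hptw
  rw [hsinf] at hω
  linarith
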